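/- Define φ : ℝ → ℝ by φ(x) = (x³ + x − 2)² / (3x² + 1)². Then there exists x̄ ∈ (−2, −1) such that φ′(x̄) = 0 and x̄³ + x̄ − 2 ≠ 0 (so φ(x̄) > 0); hence φ has a spurious stationary point that is not a solution of the feasibility problem x³ + x − 2 = 0, whose unique real solution is x = 1. -/

import Mathlib

lemma den_pos (x : ℝ) : (0:ℝ) < 3 * x ^ 2 + 1 := by positivity

lemma phi_deriv (φ : ℝ → ℝ)
    (hφ : ∀ x : ℝ, φ x = (x ^ 3 + x - 2) ^ 2 / (3 * x ^ 2 + 1) ^ 2) (x : ℝ) :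
    HasDerivAt φ (2 * (x ^ 3 + x - 2) * (3 * x ^ 4 + 12 * x + 1)
      / (3 * x ^ 2 + 1) ^ 3) x := by
  have hfun : φ = fun x : ℝ => (x ^ 3 + x - 2) ^ 2 / (3 * x ^ 2 + 1) ^ 2 :=
    funext hφ
  have hc : HasDerivAt (fun x : ℝ => x ^ 3 + x - 2) (3 * x ^ 2 + 1) x := by
    have := ((hasDerivAt_pow 3 x).add (hasDerivAt_id x)).sub_const 2
    simpa using this
  have hn : HasDerivAt (fun x : ℝ => (x ^ 3 + x - 2) ^ 2)
      (2 * (x ^ 3 + x - 2) * (3 * x ^ 2 + 1)) x := by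
    have := hc.pow 2
    simpa [Pi.pow_def, mul_comm, mul_assoc, mul_left_comm] using this
  have hd0 : HasDerivAt (fun x : ℝ => 3 * x ^ 2 + 1) (6 * x) x := by
    have := ((hasDerivAt_pow 2 x).const_mul 3).add_const 1
    refine this.congr_deriv ?_
    ring
  have hd : HasDerivAt (fun x : ℝ => (3 * x ^ 2 + 1) ^ 2)
      (2 * (3 * x ^ 2 + 1) * (6 * x)) x := by
    have := hd0.pow 2
    simpa [Pi.pow_def, mul_comm, mul_assoc, mul_left_comm] using this
  have hne : ((3 * x ^ 2 + 1) ^ 2 : ℝ) ≠ 0 := by positivity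
  have := hn.div hd hne
  rw [hfun]
  refine this.congr_deriv ?_
  have h1 : (3 * x ^ 2 + 1 : ℝ) ≠ 0 := (den_pos x).ne'
  field_simp
  ring

theorem spurious_stationary_point
    (φ : ℝ → ℝ)
    (hφ : ∀ x : ℝ, φ x = (x ^ 3 + x - 2) ^ 2 / (3 * x ^ 2 + 1) ^ 2) :
    (∃ xbar : ℝ, xbar ∈ Set.Ioo (-2 : ℝ) (-1) ∧
      deriv φ xbar = 0 ∧
      xbar ^ 3 + xbar - 2 ≠ 0 ∧
      0 < φ xbar) ∧
    (∀ x : ℝ, x ^ 3 + x - 2 = 0 ↔ x = 1) := by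
  constructor
  · -- find root of g(x) = 3x⁴+12x+1 in (-2,-1)
    have hcont : ContinuousOn (fun x : ℝ => 3 * x ^ 4 + 12 * x + 1)
        (Set.Icc (-2 : ℝ) (-1)) := (by continuity : Continuous _).continuousOn
    have hmem : (0:ℝ) ∈ Set.Ioo ((fun x : ℝ => 3 * x ^ 4 + 12 * x + 1) (-1))
        ((fun x : ℝ => 3 * x ^ 4 + 12 * x + 1) (-2)) := by
      constructor <;> norm_num
    have := intermediate_value_Ioo' (by norm_num : (-2:ℝ) ≤ -1) hcont hmem
    obtain ⟨xbar, hx, hg⟩ := this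
    simp only at hg
    refine ⟨xbar, hx, ?_, ?_, ?_⟩
    · have hder := phi_deriv φ hφ xbar
      rw [hder.deriv]
      rw [hg]
      ring
    · have h1 : xbar < -1 := hx.2
      intro hc
      have h3 : xbar ^ 3 < -1 := by nlinarith [sq_nonneg (xbar - 1)]
      linarith
    · rw [hφ]
      have hc : xbar ^ 3 + xbar - 2 ≠ 0 := by
        have h1 : xbar < -1 := hx.2
        intro hc0
        have h3 : xbar ^ 3 < -1 := by nlinarith [sq_nonneg (xbar - 1)]
        linarith
      positivity
  · intro x
    constructor
    · intro h
      have hfac : (x - 1) * (x ^ 2 + x + 2) = 0 := by nlinarith [h]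
      rcases mul_eq_zero.mp hfac with h1 | h2
      · linarith
      · nlinarith [sq_nonneg (x + 1/2)]
    · rintro rfl; norm_num
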